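/- arXiv:2210.09343 — 2 statements merged into one kernel-verified Lean document; each statement's English description precedes it below -/
import Mathlib

section
/- For the system f(x₁,x₂) = (a x₁, b x₂ + γ x₁²) with output h(x) = x₂², every iterated output function h ∘ f^[k] (k ∈ ℕ) lies in the real linear span of the three functions x ↦ x₂², x ↦ x₁⁴, x ↦ x₁²x₂. -/
theorem stmt_11 (a b γ : ℝ)
    (f : ℝ × ℝ → ℝ × ℝ) (hf : f = fun x => (a * x.1, b * x.2 + γ * x.1 ^ 2))
    (h : ℝ × ℝ → ℝ) (hh : h = fun x => x.2 ^ 2) :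
    ∀ k : ℕ, (h ∘ f^[k]) ∈ Submodule.span ℝ
      ({fun x : ℝ × ℝ => x.2 ^ 2, fun x : ℝ × ℝ => x.1 ^ 4,
        fun x : ℝ × ℝ => x.1 ^ 2 * x.2} : Set (ℝ × ℝ → ℝ)) := by
  intro k
  have hform : ∀ k : ℕ, ∃ c : ℝ,
      f^[k] = fun x : ℝ × ℝ => (a ^ k * x.1, b ^ k * x.2 + c * x.1 ^ 2) := by
    intro k
    induction k with
    | zero => exact ⟨0, by funext x; simp⟩
    | succ n ih =>
      obtain ⟨c, hc⟩ := ih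
      refine ⟨b * c + γ * a ^ (2 * n), ?_⟩
      funext x
      rw [Function.iterate_succ', Function.comp_apply, hc, hf]
      simp only [Prod.mk.injEq]
      refine ⟨by ring, ?_⟩
      rw [pow_mul]
      ring
  obtain ⟨c, hc⟩ := hform k
  have key : (h ∘ f^[k]) =
      (b ^ (2 * k)) • (fun x : ℝ × ℝ => x.2 ^ 2)
      + (c ^ 2) • (fun x : ℝ × ℝ => x.1 ^ 4)
      + (2 * b ^ k * c) • (fun x : ℝ × ℝ => x.1 ^ 2 * x.2) := by
    funext x
    simp only [Function.comp_apply, hc, hh, Pi.add_apply, Pi.smul_apply, smul_eq_mul]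
    rw [pow_mul]
    ring
  rw [key]
  have h1 : (fun x : ℝ × ℝ => x.2 ^ 2) ∈ Submodule.span ℝ
      ({fun x : ℝ × ℝ => x.2 ^ 2, fun x : ℝ × ℝ => x.1 ^ 4,
        fun x : ℝ × ℝ => x.1 ^ 2 * x.2} : Set (ℝ × ℝ → ℝ)) :=
    Submodule.subset_span (by simp)
  have h2 : (fun x : ℝ × ℝ => x.1 ^ 4) ∈ Submodule.span ℝ
      ({fun x : ℝ × ℝ => x.2 ^ 2, fun x : ℝ × ℝ => x.1 ^ 4,
        fun x : ℝ × ℝ => x.1 ^ 2 * x.2} : Set (ℝ × ℝ → ℝ)) :=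
    Submodule.subset_span (by simp)
  have h3 : (fun x : ℝ × ℝ => x.1 ^ 2 * x.2) ∈ Submodule.span ℝ
      ({fun x : ℝ × ℝ => x.2 ^ 2, fun x : ℝ × ℝ => x.1 ^ 4,
        fun x : ℝ × ℝ => x.1 ^ 2 * x.2} : Set (ℝ × ℝ → ℝ)) :=
    Submodule.subset_span (by simp)
  exact Submodule.add_mem _ (Submodule.add_mem _ (Submodule.smul_mem _ _ h1)
    (Submodule.smul_mem _ _ h2)) (Submodule.smul_mem _ _ h3)
end

section
/- Conversely to the previous statement: let f : M → M and h : M → ℝ, and suppose there exist finitely many functions ψ₁, …, ψ_{n_L} : M → ℝ whose linear span contains h ∘ f^[k] for every k ∈ ℕ, and whose span is invariant under composition with f (i.e., ψᵢ ∘ f lies in the span of ψ₁,…,ψ_{n_L} for each i). Then there exist a matrix K and a linear functional W_h such that ψ(f(x)) = K ψ(x) and h(x) = W_h ψ(x) for all x ∈ M, where ψ = (ψ₁,…,ψ_{n_L}). -/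
theorem stmt_15 {M : Type*} (nL : ℕ) (f : M → M) (h : M → ℝ)
    (ψ : Fin nL → M → ℝ)
    (hobs : ∀ k : ℕ, (h ∘ f^[k]) ∈ Submodule.span ℝ (Set.range ψ))
    (hinv : ∀ i : Fin nL, (fun x => ψ i (f x)) ∈ Submodule.span ℝ (Set.range ψ)) :
    ∃ (K : Matrix (Fin nL) (Fin nL) ℝ) (Wh : Fin nL → ℝ),
      (∀ x : M, (fun i => ψ i (f x)) = K.mulVec (fun i => ψ i x)) ∧
      (∀ x : M, h x = dotProduct Wh (fun i => ψ i x)) := by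
  have hK : ∀ i : Fin nL, ∃ c : Fin nL → ℝ,
      (∑ j, c j • ψ j) = fun x => ψ i (f x) := by
    intro i
    obtain ⟨c, hc⟩ := Finsupp.mem_span_range_iff_exists_finsupp.mp (hinv i)
    exact ⟨c, by rw [← hc]; simp [Finsupp.sum_fintype]⟩
  choose K hKc using hK
  have hW : ∃ c : Fin nL → ℝ, (∑ j, c j • ψ j) = h := by
    have := hobs 0
    simp only [Function.iterate_zero, Function.comp_id] at this
    obtain ⟨c, hc⟩ := Finsupp.mem_span_range_iff_exists_finsupp.mp this
    exact ⟨c, by rw [← hc]; simp [Finsupp.sum_fintype]⟩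
  obtain ⟨Wh, hWh⟩ := hW
  refine ⟨fun i j => K i j, Wh, ?_, ?_⟩
  · intro x
    funext i
    have := congrFun (hKc i) x
    simp only [Finset.sum_apply, Pi.smul_apply, smul_eq_mul] at this
    simpa [Matrix.mulVec, dotProduct] using this.symm
  · intro x
    have := congrFun hWh x
    simp only [Finset.sum_apply, Pi.smul_apply, smul_eq_mul] at this
    simpa [dotProduct] using this.symm
end
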